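/- Let 𝔛 be a finite set, Q a stochastic matrix on 𝔛, θ > 0, and G = θ(Q − I). Let m ≥ 1, let A₁,…,Aₙ be pairwise disjoint subsets of 𝔛, let k⃗ = (k₁,…,k_{n−1}) be a vector of nonnegative integers, and set k̃ = Σ_{j=1}^{n−1} kⱼ. Writing S(k⃗, l) := S((k₁,…,k_{n−1}, l)), the following matrix identity holds: θ D(Aₙ) Q Σ_{l=0}^{m−1} [Γ(θ+k̃+l)/Γ(k̃+l+1)] Σ_{σ∈S(k⃗,l)} ∏_{j=1}^{k̃+l} ((I − G/j)⁻¹ D(A_{σⱼ})) 1⃗ = [Γ(θ+k̃+m)/Γ(k̃+m)] D(Aₙ) Σ_{σ∈S(k⃗,m−1)} ∏_{j=1}^{k̃+m−1} ((I − G/j)⁻¹ D(A_{σⱼ})) 1⃗. -/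

import Mathlib

open MeasureTheory ProbabilityTheory Matrix Filter

noncomputable section

/-- The Beta(1,θ) law on ℝ: density θ(1-x)^(θ-1) on [0,1]. -/
def beta1 (θ : ℝ) : Measure ℝ :=
  (volume.restrict (Set.Icc (0:ℝ) 1)).withDensity fun x => ENNReal.ofReal (θ * (1-x)^(θ-1))

/-- Stick lengths of a residual allocation model: `stick X j` is `P_{j+1}`. -/
def stick {Ω : Type*} (X : ℕ → Ω → ℝ) (j : ℕ) (ω : Ω) : ℝ :=
  X j ω * ∏ i ∈ Finset.range j, (1 - X i ω)

/-- The random measure ν(A) = Σ_j P_j 1{T_j ∈ A}. -/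
def nuSB {Ω 𝔛 : Type*} (X : ℕ → Ω → ℝ) (T : ℕ → Ω → 𝔛) (A : Set 𝔛) (ω : Ω) : ℝ :=
  ∑' j, stick X j ω * A.indicator (fun _ => (1:ℝ)) (T j ω)

/-- Conditional expectation given an event: E[Z | E] = E[Z 1_E]/P(E). -/
def cexp {Ω : Type*} [MeasurableSpace Ω] (Pr : Measure Ω) (Z : Ω → ℝ) (E : Set Ω) : ℝ :=
  (∫ ω in E, Z ω ∂Pr) / (Pr E).toReal

/-- Generator matrix: nonnegative off-diagonal entries, rows summing to zero. -/
def IsGenerator {𝔛 : Type*} [Fintype 𝔛] [DecidableEq 𝔛] (G : Matrix 𝔛 𝔛 ℝ) : Prop :=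
  (∀ x y, x ≠ y → 0 ≤ G x y) ∧ ∀ x, G x x = -∑ y ∈ Finset.univ.erase x, G x y

/-- Irreducibility of a square matrix: some power has positive (x,y) entry for all x,y. -/
def IrreducibleMat {𝔛 : Type*} [Fintype 𝔛] [DecidableEq 𝔛] (Q : Matrix 𝔛 𝔛 ℝ) : Prop :=
  ∀ x y, ∃ m, 1 ≤ m ∧ 0 < (Q ^ m) x y

/-- Row-stochastic matrix. -/
def IsStochastic {𝔛 : Type*} [Fintype 𝔛] (Q : Matrix 𝔛 𝔛 ℝ) : Prop :=
  (∀ x y, 0 ≤ Q x y) ∧ ∀ x, ∑ y, Q x y = 1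

-- D(A): diagonal 0-1 matrix of a set.
open scoped Classical in
def DMat {𝔛 : Type*} [Fintype 𝔛] [DecidableEq 𝔛] (A : Set 𝔛) : Matrix 𝔛 𝔛 ℝ :=
  Matrix.diagonal fun x => if x ∈ A then 1 else 0

/-- Reverse-ordered matrix product M_k ⋯ M_1 of M indexed by `Fin k` (0-based). -/
def revProd {𝔛 : Type*} [Fintype 𝔛] [DecidableEq 𝔛] {k : ℕ} (M : Fin k → Matrix 𝔛 𝔛 ℝ) :
    Matrix 𝔛 𝔛 ℝ :=
  ((List.ofFn M).reverse).prod

-- The set S(k⃗) of sequences in `α^N` with exactly `kv a` entries equal to `a`.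
open scoped Classical in
def SSeq {α : Type*} [Fintype α] [DecidableEq α] (kv : α → ℕ) (N : ℕ) :
    Finset (Fin N → α) :=
  Finset.univ.filter fun σ => ∀ a, (Finset.univ.filter fun i => σ i = a).card = kv a

end


noncomputable section StmtAux

open Matrix

variable {𝔛 : Type*} [Fintype 𝔛] [DecidableEq 𝔛]

lemma revProd_snoc {N : ℕ} (M : Fin (N + 1) → Matrix 𝔛 𝔛 ℝ) :
    revProd M = M (Fin.last N) * revProd (fun i : Fin N => M i.castSucc) := by
  unfold revProd
  rw [List.ofFn_succ' M, List.concat_eq_append, List.reverse_append]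
  simp

lemma card_filter_snoc {α : Type*} [DecidableEq α] {N : ℕ} (τ : Fin N → α) (a b : α) :
    (Finset.univ.filter fun i : Fin (N + 1) => (Fin.snoc τ a : Fin (N + 1) → α) i = b).card
      = (Finset.univ.filter fun i : Fin N => τ i = b).card + if a = b then 1 else 0 := by
  rw [Finset.card_filter, Finset.card_filter, Fin.sum_univ_castSucc]
  simp

lemma mem_SSeq {α : Type*} [Fintype α] [DecidableEq α] {kv : α → ℕ} {N : ℕ} {σ : Fin N → α} :
    σ ∈ SSeq kv N ↔ ∀ a, (Finset.univ.filter fun i => σ i = a).card = kv a := by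
  classical
  simp [SSeq]

lemma sum_SSeq_succ {α β : Type*} [Fintype α] [DecidableEq α] [AddCommMonoid β]
    (v : α → ℕ) (N : ℕ) (f : (Fin (N + 1) → α) → β) :
    ∑ σ ∈ SSeq v (N + 1), f σ
      = ∑ a ∈ Finset.univ.filter (fun a => 1 ≤ v a),
          ∑ τ ∈ SSeq (Function.update v a (v a - 1)) N, f (Fin.snoc τ a) := by
  classical
  have key : ∀ a : α,
      ∑ σ ∈ (SSeq v (N + 1)).filter (fun σ => σ (Fin.last N) = a), f σ
        = if 1 ≤ v a then
            ∑ τ ∈ SSeq (Function.update v a (v a - 1)) N, f (Fin.snoc τ a) else 0 := by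
    intro a
    by_cases hva : 1 ≤ v a
    · rw [if_pos hva]
      refine Finset.sum_nbij' (fun σ => Fin.init σ) (fun τ => Fin.snoc τ a) ?_ ?_ ?_ ?_ ?_
      · intro σ hσ
        show Fin.init σ ∈ SSeq (Function.update v a (v a - 1)) N
        rw [Finset.mem_filter] at hσ
        obtain ⟨h1, h2⟩ := hσ
        rw [mem_SSeq] at h1 ⊢
        intro b
        have hs : Fin.snoc (Fin.init σ) a = σ := by
          conv_rhs => rw [← Fin.snoc_init_self σ]
          rw [h2]
        have hcard := card_filter_snoc (Fin.init σ) a b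
        rw [hs, h1 b] at hcard
        rw [Function.update_apply]
        by_cases hba : b = a
        · subst hba
          rw [if_pos rfl] at hcard ⊢
          omega
        · rw [if_neg hba]
          rw [if_neg (fun h : a = b => hba h.symm)] at hcard
          omega
      · intro τ hτ
        rw [Finset.mem_filter]
        refine ⟨?_, by simp⟩
        rw [mem_SSeq] at hτ ⊢
        intro b
        rw [card_filter_snoc, hτ b, Function.update_apply]
        by_cases hba : b = a
        · subst hba
          rw [if_pos rfl, if_pos rfl]
          omega
        · rw [if_neg hba, if_neg (fun h : a = b => hba h.symm), add_zero]
      · intro σ hσ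
        rw [Finset.mem_filter] at hσ
        conv_rhs => rw [← Fin.snoc_init_self σ]
        rw [hσ.2]
      · intro τ _
        simp
      · intro σ hσ
        rw [Finset.mem_filter] at hσ
        conv_lhs => rw [← Fin.snoc_init_self σ]
        rw [hσ.2]
    · rw [if_neg hva]
      have hempty : (SSeq v (N + 1)).filter (fun σ => σ (Fin.last N) = a) = ∅ := by
        rw [Finset.filter_eq_empty_iff]
        intro σ hσ hlast
        rw [mem_SSeq] at hσ
        have h0 : (Finset.univ.filter fun i : Fin (N+1) => σ i = a).card = 0 := by
          rw [hσ a]; omega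
        have hmem : Fin.last N ∈ Finset.univ.filter fun i : Fin (N+1) => σ i = a := by
          simp [hlast]
        rw [Finset.card_eq_zero] at h0
        rw [h0] at hmem
        exact absurd hmem (Finset.notMem_empty _)
      rw [hempty, Finset.sum_empty]
  rw [← Finset.sum_fiberwise (SSeq v (N + 1)) (fun σ => σ (Fin.last N)) f,
    Finset.sum_filter]
  exact Finset.sum_congr rfl fun a _ => key a

lemma DMat_mul_self (A : Set 𝔛) : DMat A * DMat A = DMat A := by
  classical
  unfold DMat
  rw [Matrix.diagonal_mul_diagonal]
  ext x y
  rw [Matrix.diagonal_apply, Matrix.diagonal_apply]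
  by_cases hxy : x = y
  · subst hxy
    by_cases hx : x ∈ A <;> simp [hx]
  · simp [hxy]

lemma DMat_mul_disjoint {A B : Set 𝔛} (h : Disjoint A B) : DMat A * DMat B = 0 := by
  classical
  unfold DMat
  rw [Matrix.diagonal_mul_diagonal]
  ext x y
  rw [Matrix.diagonal_apply]
  by_cases hxy : x = y
  · subst hxy
    by_cases hx : x ∈ A
    · simp [hx, Set.disjoint_left.mp h hx]
    · simp [hx]
  · simp [hxy]

lemma mulVec_sum' {ι : Type*} (s : Finset ι) (M : Matrix 𝔛 𝔛 ℝ) (f : ι → 𝔛 → ℝ) :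
    M.mulVec (∑ i ∈ s, f i) = ∑ i ∈ s, M.mulVec (f i) := by
  classical
  induction s using Finset.induction_on with
  | empty => simp [Matrix.mulVec_zero]
  | @insert a s ha ih => rw [Finset.sum_insert ha, Finset.sum_insert ha, Matrix.mulVec_add, ih]

lemma Q_mulVec_const {Q : Matrix 𝔛 𝔛 ℝ} (hQ : IsStochastic Q) (c : ℝ) :
    Q.mulVec (fun _ => c) = fun _ => c := by
  funext x
  simp only [Matrix.mulVec, dotProduct]
  rw [← Finset.sum_mul, hQ.2 x, one_mul]

lemma det_unit {Q : Matrix 𝔛 𝔛 ℝ} (hQ : IsStochastic Q) {θ : ℝ} (hθ : 0 < θ)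
    {G : Matrix 𝔛 𝔛 ℝ} (hG : G = θ • (Q - 1)) {j : ℕ} (hj : 1 ≤ j) :
    IsUnit (1 - ((j : ℕ) : ℝ)⁻¹ • G).det := by
  have hQ1 : ∀ x, Q x x ≤ 1 := by
    intro x
    calc Q x x ≤ ∑ y, Q x y :=
          Finset.single_le_sum (fun y _ => hQ.1 x y) (Finset.mem_univ x)
    _ = 1 := hQ.2 x
  have hjpos : (0:ℝ) < (j : ℝ) := by exact_mod_cast hj
  rw [isUnit_iff_ne_zero]
  apply det_ne_zero_of_sum_row_lt_diag
  intro k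
  have hentry : ∀ l, (1 - ((j : ℕ) : ℝ)⁻¹ • G) k l
      = (if k = l then (1:ℝ) else 0) - (j : ℝ)⁻¹ * (θ * (Q k l - if k = l then 1 else 0)) := by
    intro l
    simp [hG, Matrix.sub_apply, Matrix.smul_apply, Matrix.one_apply]
  have hsum : ∑ l ∈ Finset.univ.erase k, ‖(1 - ((j : ℕ) : ℝ)⁻¹ • G) k l‖
      = (j : ℝ)⁻¹ * (θ * (1 - Q k k)) := by
    have hoff : ∀ l ∈ Finset.univ.erase k, ‖(1 - ((j : ℕ) : ℝ)⁻¹ • G) k l‖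
        = (j : ℝ)⁻¹ * (θ * Q k l) := by
      intro l hl
      have hlk : l ≠ k := Finset.ne_of_mem_erase hl
      rw [hentry l, if_neg (fun h : k = l => hlk h.symm), sub_zero, zero_sub,
        Real.norm_eq_abs, abs_neg,
        abs_of_nonneg (mul_nonneg (inv_nonneg.mpr hjpos.le)
          (mul_nonneg hθ.le (hQ.1 k l)))]
    rw [Finset.sum_congr rfl hoff, ← Finset.mul_sum, ← Finset.mul_sum,
      Finset.sum_erase_eq_sub (Finset.mem_univ k), hQ.2 k]
  have hdiag : ‖(1 - ((j : ℕ) : ℝ)⁻¹ • G) k k‖ = 1 + (j : ℝ)⁻¹ * (θ * (1 - Q k k)) := by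
    rw [hentry k, if_pos rfl, Real.norm_eq_abs]
    have h1 : (0:ℝ) ≤ (j : ℝ)⁻¹ * (θ * (1 - Q k k)) := by
      apply mul_nonneg (inv_nonneg.mpr hjpos.le)
      apply mul_nonneg hθ.le
      linarith [hQ1 k]
    rw [abs_of_nonneg (by nlinarith)]
    ring_nf
  rw [hsum, hdiag]
  linarith

lemma theta_Q_mul_inv {Q : Matrix 𝔛 𝔛 ℝ} (hQ : IsStochastic Q) {θ : ℝ} (hθ : 0 < θ)
    {G : Matrix 𝔛 𝔛 ℝ} (hG : G = θ • (Q - 1)) {j : ℕ} (hj : 1 ≤ j) :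
    θ • (Q * (1 - ((j : ℕ) : ℝ)⁻¹ • G)⁻¹)
      = (((j : ℕ) : ℝ) + θ) • (1 - ((j : ℕ) : ℝ)⁻¹ • G)⁻¹
        - ((j : ℕ) : ℝ) • (1 : Matrix 𝔛 𝔛 ℝ) := by
  have hjne : ((j : ℕ) : ℝ) ≠ 0 := by
    have : (0:ℝ) < (j : ℝ) := by exact_mod_cast hj
    exact this.ne'
  set B := (1 - ((j : ℕ) : ℝ)⁻¹ • G)⁻¹ with hB
  have h1 : (1 - ((j : ℕ) : ℝ)⁻¹ • G) * B = 1 :=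
    Matrix.mul_nonsing_inv _ (det_unit hQ hθ hG hj)
  rw [sub_mul, one_mul, smul_mul_assoc] at h1
  have h3 : ((j : ℕ) : ℝ)⁻¹ • (G * B) = B - 1 := by
    rw [← h1]; abel
  have h4 : G * B = ((j : ℕ) : ℝ) • (B - 1) := by
    have h := congrArg (fun X => ((j : ℕ) : ℝ) • X) h3
    simpa [smul_smul, mul_inv_cancel₀ hjne] using h
  have h5 : θ • (Q * B) - θ • B = ((j : ℕ) : ℝ) • (B - 1) := by
    rw [← h4, hG, smul_mul_assoc, sub_mul, one_mul, smul_sub]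
  rw [eq_add_of_sub_eq h5]
  rw [smul_sub, add_smul]
  abel

def Fv (G : Matrix 𝔛 𝔛 ℝ) {n : ℕ} (A : Fin n → Set 𝔛) (v : Fin n → ℕ) (N : ℕ) : 𝔛 → ℝ :=
  ∑ σ ∈ SSeq v N,
    (revProd fun i : Fin N => (1 - (((i : ℕ) + 1 : ℕ) : ℝ)⁻¹ • G)⁻¹ * DMat (A (σ i))).mulVec
      (fun _ => (1:ℝ))

lemma Fv_zero (G : Matrix 𝔛 𝔛 ℝ) {n : ℕ} (A : Fin n → Set 𝔛) (v : Fin n → ℕ) :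
    Fv G A v 0 = fun _ => ((SSeq v 0).card : ℝ) := by
  unfold Fv
  funext x
  rw [Finset.sum_apply]
  simp [revProd, Matrix.one_mulVec]

lemma Fv_succ (G : Matrix 𝔛 𝔛 ℝ) {n : ℕ} (A : Fin n → Set 𝔛) (v : Fin n → ℕ) (N : ℕ) :
    Fv G A v (N + 1) = ∑ a ∈ Finset.univ.filter (fun a => 1 ≤ v a),
      ((1 - ((N + 1 : ℕ) : ℝ)⁻¹ • G)⁻¹ * DMat (A a)).mulVec
        (Fv G A (Function.update v a (v a - 1)) N) := by
  unfold Fv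
  rw [sum_SSeq_succ]
  refine Finset.sum_congr rfl fun a _ => ?_
  rw [mulVec_sum']
  refine Finset.sum_congr rfl fun τ _ => ?_
  rw [revProd_snoc, ← Matrix.mulVec_mulVec]
  simp

lemma recD {Q : Matrix 𝔛 𝔛 ℝ} (hQ : IsStochastic Q) {θ : ℝ} (hθ : 0 < θ)
    {G : Matrix 𝔛 𝔛 ℝ} (hG : G = θ • (Q - 1))
    {n : ℕ} (A : Fin (n + 1) → Set 𝔛) (hdisj : ∀ i j, i ≠ j → Disjoint (A i) (A j))
    (v : Fin (n + 1) → ℕ) (N : ℕ) :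
    θ • ((DMat (A (Fin.last n)) * Q).mulVec (Fv G A v N))
      = ((N : ℝ) + θ) • (DMat (A (Fin.last n))).mulVec (Fv G A v N)
        - (N : ℝ) • (if 1 ≤ v (Fin.last n) then
            (DMat (A (Fin.last n))).mulVec
              (Fv G A (Function.update v (Fin.last n) (v (Fin.last n) - 1)) (N - 1))
          else 0) := by
  cases N with
  | zero =>
      simp only [Nat.cast_zero, zero_add, zero_smul, sub_zero]
      rw [← Matrix.mulVec_mulVec, Fv_zero, Q_mulVec_const hQ]
  | succ N =>
      have hFv := Fv_succ G A v N
      have hterm : ∀ a : Fin (n + 1),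
          θ • Q.mulVec (((1 - ((N + 1 : ℕ) : ℝ)⁻¹ • G)⁻¹ * DMat (A a)).mulVec
              (Fv G A (Function.update v a (v a - 1)) N))
            = (((N + 1 : ℕ) : ℝ) + θ) • ((1 - ((N + 1 : ℕ) : ℝ)⁻¹ • G)⁻¹ * DMat (A a)).mulVec
                (Fv G A (Function.update v a (v a - 1)) N)
              - ((N + 1 : ℕ) : ℝ) • (DMat (A a)).mulVec
                  (Fv G A (Function.update v a (v a - 1)) N) := by
        intro a
        rw [Matrix.mulVec_mulVec, ← Matrix.smul_mulVec, ← mul_assoc,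
          ← smul_mul_assoc, theta_Q_mul_inv hQ hθ hG (Nat.le_add_left 1 N),
          sub_mul, smul_mul_assoc, smul_mul_assoc, one_mul,
          Matrix.sub_mulVec, Matrix.smul_mulVec, Matrix.smul_mulVec]
      have hQF : θ • (Q.mulVec (Fv G A v (N + 1)))
          = (((N + 1 : ℕ) : ℝ) + θ) • Fv G A v (N + 1)
            - ((N + 1 : ℕ) : ℝ) • ∑ a ∈ Finset.univ.filter (fun a => 1 ≤ v a),
                (DMat (A a)).mulVec (Fv G A (Function.update v a (v a - 1)) N) := by
        conv_lhs => rw [hFv]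
        rw [mulVec_sum', Finset.smul_sum]
        rw [Finset.sum_congr rfl (fun a _ => hterm a), Finset.sum_sub_distrib,
          ← Finset.smul_sum, ← Finset.smul_sum, ← hFv]
      have hproj : (DMat (A (Fin.last n))).mulVec
            (∑ a ∈ Finset.univ.filter (fun a => 1 ≤ v a),
              (DMat (A a)).mulVec (Fv G A (Function.update v a (v a - 1)) N))
          = if 1 ≤ v (Fin.last n) then
              (DMat (A (Fin.last n))).mulVec
                (Fv G A (Function.update v (Fin.last n) (v (Fin.last n) - 1)) N)
            else 0 := by
        rw [mulVec_sum']
        have hterm2 : ∀ a ∈ Finset.univ.filter (fun a => 1 ≤ v a),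
            (DMat (A (Fin.last n))).mulVec
                ((DMat (A a)).mulVec (Fv G A (Function.update v a (v a - 1)) N))
              = if a = Fin.last n then
                  (DMat (A (Fin.last n))).mulVec
                    (Fv G A (Function.update v a (v a - 1)) N)
                else 0 := by
          intro a _
          rw [Matrix.mulVec_mulVec]
          by_cases ha : a = Fin.last n
          · subst ha
            rw [if_pos rfl, DMat_mul_self]
          · rw [if_neg ha, DMat_mul_disjoint (hdisj _ _ (fun h => ha h.symm)),
              Matrix.zero_mulVec]
        rw [Finset.sum_congr rfl hterm2, Finset.sum_ite_eq']
        simp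
      rw [← Matrix.mulVec_mulVec, ← Matrix.mulVec_smul, hQF, Matrix.mulVec_sub,
        Matrix.mulVec_smul, Matrix.mulVec_smul, hproj]
      norm_num

lemma gamma_ne_zero_of_pos {x : ℝ} (hx : 0 < x) : Real.Gamma x ≠ 0 :=
  (Real.Gamma_pos_of_pos hx).ne'

lemma snoc_update {n : ℕ} (kvec : Fin n → ℕ) (m : ℕ) :
    Function.update (Fin.snoc kvec (m + 1) : Fin (n + 1) → ℕ) (Fin.last n) m
      = Fin.snoc kvec m := by
  funext b
  refine Fin.lastCases ?_ (fun i => ?_) b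
  · rw [Function.update_self]
    simp
  · rw [Function.update_of_ne (Fin.castSucc_lt_last i).ne]
    simp

lemma main_aux {Q : Matrix 𝔛 𝔛 ℝ} (hQ : IsStochastic Q) {θ : ℝ} (hθ : 0 < θ)
    {G : Matrix 𝔛 𝔛 ℝ} (hG : G = θ • (Q - 1)) {n : ℕ} (A : Fin (n + 1) → Set 𝔛)
    (hdisj : ∀ i j, i ≠ j → Disjoint (A i) (A j)) (kvec : Fin n → ℕ) (m : ℕ) :
    θ • ((DMat (A (Fin.last n)) * Q).mulVec
        (∑ l ∈ Finset.range (m + 1),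
          (Real.Gamma (θ + (∑ j, kvec j) + l) / Real.Gamma ((∑ j, kvec j) + l + 1)) •
            Fv G A (Fin.snoc kvec l) ((∑ j, kvec j) + l)))
      = (Real.Gamma (θ + (∑ j, kvec j) + m + 1) / Real.Gamma ((∑ j, kvec j) + m + 1)) •
          (DMat (A (Fin.last n))).mulVec (Fv G A (Fin.snoc kvec m) ((∑ j, kvec j) + m)) := by
  set K : ℕ := ∑ j, kvec j with hKdef
  induction m with
  | zero =>
      rw [Finset.sum_range_one, Matrix.mulVec_smul, smul_comm θ,
        recD hQ hθ hG A hdisj]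
      simp only [Fin.snoc_last]
      rw [if_neg (by omega : ¬ (1 : ℕ) ≤ 0), smul_zero, sub_zero, smul_smul]
      congr 1
      have hne1 : (θ + (K : ℝ) : ℝ) ≠ 0 := by positivity
      push_cast
      simp only [add_zero]
      rw [Real.Gamma_add_one hne1]
      ring
  | succ m ih =>
      rw [Finset.sum_range_succ, Matrix.mulVec_add, smul_add, ih,
        Matrix.mulVec_smul, smul_comm θ, recD hQ hθ hG A hdisj]
      simp only [Fin.snoc_last]
      rw [if_pos (Nat.le_add_left 1 m), Nat.add_sub_cancel, snoc_update,
        show K + (m + 1) - 1 = K + m by omega]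
      have hne1 : (θ + (K : ℝ) + (m : ℝ) : ℝ) ≠ 0 := by positivity
      have hne2 : ((K : ℝ) + (m : ℝ) + 1 : ℝ) ≠ 0 := by positivity
      have hΓ : Real.Gamma ((K : ℝ) + (m : ℝ) + 1) ≠ 0 :=
        gamma_ne_zero_of_pos (by positivity)
      have hc1 : (Real.Gamma (θ + K + m + 1) / Real.Gamma (K + m + 1) : ℝ)
          = (Real.Gamma (θ + K + (m + 1 : ℕ)) /
              Real.Gamma (K + (m + 1 : ℕ) + 1)) * ((K + (m + 1) : ℕ) : ℝ) := by
        push_cast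
        rw [show (θ + (K : ℝ) + ((m : ℝ) + 1) : ℝ) = (θ + (K : ℝ) + (m : ℝ)) + 1 by ring,
          show ((K : ℝ) + ((m : ℝ) + 1) + 1 : ℝ) = (((K : ℝ) + (m : ℝ) + 1)) + 1 by ring,
          Real.Gamma_add_one hne1, Real.Gamma_add_one hne2]
        field_simp
        ring
      have hc2 : (Real.Gamma (θ + K + (m + 1 : ℕ)) /
              Real.Gamma (K + (m + 1 : ℕ) + 1) : ℝ) * (((K + (m + 1) : ℕ) : ℝ) + θ)
          = Real.Gamma (θ + K + (m + 1 : ℕ) + 1) /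
              Real.Gamma (K + (m + 1 : ℕ) + 1) := by
        have hne3 : (θ + (K : ℝ) + ((m : ℝ) + 1) : ℝ) ≠ 0 := by positivity
        push_cast
        rw [Real.Gamma_add_one hne3]
        ring
      rw [hc1, ← hc2]
      module

end StmtAux

/-- Lemma 5.2: the key summation identity. -/
theorem stmt10
    {𝔛 : Type*} [Fintype 𝔛] [DecidableEq 𝔛]
    (Q : Matrix 𝔛 𝔛 ℝ) (hQ : IsStochastic Q) (θ : ℝ) (hθ : 0 < θ)
    (G : Matrix 𝔛 𝔛 ℝ) (hG : G = θ • (Q - 1))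
    (m' n' : ℕ) (A : Fin (n' + 1) → Set 𝔛) (hdisj : ∀ i j, i ≠ j → Disjoint (A i) (A j))
    (kvec : Fin n' → ℕ) :
    θ • ((DMat (A (Fin.last n')) * Q).mulVec
        (∑ l ∈ Finset.range (m' + 1),
          (Real.Gamma (θ + (∑ j, kvec j) + l) / Real.Gamma ((∑ j, kvec j) + l + 1)) •
            ∑ σ ∈ SSeq (Fin.snoc kvec l) ((∑ j, kvec j) + l),
              (revProd fun i : Fin ((∑ j, kvec j) + l) =>
                  (1 - (((i : ℕ) + 1 : ℕ) : ℝ)⁻¹ • G)⁻¹ * DMat (A (σ i))).mulVec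
                (fun _ => (1:ℝ))))
      = (Real.Gamma (θ + (∑ j, kvec j) + m' + 1) / Real.Gamma ((∑ j, kvec j) + m' + 1)) •
          ((DMat (A (Fin.last n'))).mulVec
            (∑ σ ∈ SSeq (Fin.snoc kvec m') ((∑ j, kvec j) + m'),
              (revProd fun i : Fin ((∑ j, kvec j) + m') =>
                  (1 - (((i : ℕ) + 1 : ℕ) : ℝ)⁻¹ • G)⁻¹ * DMat (A (σ i))).mulVec
                (fun _ => (1:ℝ)))) := by
  exact main_aux hQ hθ hG A hdisj kvec m'
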